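/- Let f be monotone k-submodular with f(∅) ≥ 0, and let o ∈ (k+1)^E with |P(o)| = r ≥ w. Let q⁰ = ∅ ⪯ q¹ ⪯ ⋯ ⪯ q^w be greedily constructed inside P(o) (each step adds the element/index pair from P(o) maximizing f), and let ō^w be the k-tuple with support P(o) agreeing with q^w on P(q^w) and with o elsewhere. Then f(o) - f(q^w) ≤ f(ō^w). -/
import Mathlib


open Finset

/-- Join `⊔` on `(k+1)^E`, where a `k`-tuple of pairwise disjoint subsets of `E`
is represented as a function `E → Option (Fin k)`. -/
def ksup {E : Type*} {k : ℕ} (x y : E → Option (Fin k)) : E → Option (Fin k) :=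
  fun e => match x e, y e with
  | none, b => b
  | some i, none => some i
  | some i, some j => if i = j then some i else none

/-- Meet `⊓` on `(k+1)^E`. -/
def kinf {E : Type*} {k : ℕ} (x y : E → Option (Fin k)) : E → Option (Fin k) :=
  fun e => match x e, y e with
  | some i, some j => if i = j then some i else none
  | _, _ => none

/-- The partial order `x ⪯ y` : `X_i ⊆ Y_i` for all `i`. -/
def kle {E : Type*} {k : ℕ} (x y : E → Option (Fin k)) : Prop :=
  ∀ e i, x e = some i → y e = some i

/-- `I_{[e,i]}`: the `k`-tuple with `{e}` in coordinate `i` and `∅` elsewhere. -/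
def ksingle {E : Type*} [DecidableEq E] {k : ℕ} (e : E) (i : Fin k) : E → Option (Fin k) :=
  fun e' => if e' = e then some i else none

/-- Marginal gain `Δ_{e,i} f(x) = f(x ⊔ I_{[e,i]}) - f(x)`. -/
def marg {E : Type*} [DecidableEq E] {k : ℕ} (f : (E → Option (Fin k)) → ℝ)
    (x : E → Option (Fin k)) (e : E) (i : Fin k) : ℝ :=
  f (ksup x (ksingle e i)) - f x

/-- `f` is `k`-submodular: `f(x⊔y) + f(x⊓y) ≤ f(x) + f(y)`. -/
def KSubmodular {E : Type*} {k : ℕ} (f : (E → Option (Fin k)) → ℝ) : Prop :=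
  ∀ x y, f (ksup x y) + f (kinf x y) ≤ f x + f y

/-- The support `P(x) = ⋃ᵢ Xᵢ` as a finset. -/
def suppK {E : Type*} [Fintype E] {k : ℕ} (x : E → Option (Fin k)) : Finset E :=
  Finset.univ.filter fun e => x e ≠ none

/-- Orthant submodularity. -/
def OrthantSubmodular {E : Type*} [DecidableEq E] {k : ℕ}
    (f : (E → Option (Fin k)) → ℝ) : Prop :=
  ∀ x y, kle x y → ∀ e, y e = none → ∀ i, marg f y e i ≤ marg f x e i

/-- Pairwise monotonicity. -/
def PairwiseMonotone {E : Type*} [DecidableEq E] {k : ℕ}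
    (f : (E → Option (Fin k)) → ℝ) : Prop :=
  ∀ x e, x e = none → ∀ i j : Fin k, i ≠ j → 0 ≤ marg f x e i + marg f x e j

/-- Monotonicity with respect to `⪯`. -/
def KMonotone {E : Type*} {k : ℕ} (f : (E → Option (Fin k)) → ℝ) : Prop :=
  ∀ x y, kle x y → f x ≤ f y



section Aux
variable {E : Type*} [DecidableEq E] {k : ℕ}

omit [DecidableEq E] in
lemma ksup_nl {x y : E → Option (Fin k)} {e : E} (hx : x e = none) :
    ksup x y e = y e := by simp [ksup, hx]

omit [DecidableEq E] in
lemma ksup_nr {x y : E → Option (Fin k)} {e : E} (hy : y e = none) :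
    ksup x y e = x e := by cases hx : x e <;> simp [ksup, hx, hy]

omit [DecidableEq E] in
lemma ksup_ss {x y : E → Option (Fin k)} {e : E} {a b : Fin k}
    (hx : x e = some a) (hy : y e = some b) :
    ksup x y e = if a = b then some a else none := by simp [ksup, hx, hy]

omit [DecidableEq E] in
lemma kinf_nl {x y : E → Option (Fin k)} {e : E} (hx : x e = none) :
    kinf x y e = none := by simp [kinf, hx]

omit [DecidableEq E] in
lemma kinf_nr {x y : E → Option (Fin k)} {e : E} (hy : y e = none) :
    kinf x y e = none := by cases hx : x e <;> simp [kinf, hx, hy]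

omit [DecidableEq E] in
lemma kinf_ss {x y : E → Option (Fin k)} {e : E} {a b : Fin k}
    (hx : x e = some a) (hy : y e = some b) :
    kinf x y e = if a = b then some a else none := by simp [kinf, hx, hy]

lemma ksingle_self (e : E) (i : Fin k) : ksingle e i e = some i := by simp [ksingle]

lemma ksingle_ne {e0 e : E} (he : e ≠ e0) (i : Fin k) : ksingle e0 i e = none := by
  simp [ksingle, he]

lemma ksup_single_self {x : E → Option (Fin k)} {e0 : E} (i0 : Fin k)
    (h0 : x e0 = none) : ksup x (ksingle e0 i0) e0 = some i0 := by
  rw [ksup_nl h0, ksingle_self]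

lemma ksup_single_ne (x : E → Option (Fin k)) {e0 e : E} (i0 : Fin k)
    (he : e ≠ e0) : ksup x (ksingle e0 i0) e = x e :=
  ksup_nr (ksingle_ne he i0)

lemma kle_sup_single (x : E → Option (Fin k)) (e0 : E) (i0 : Fin k)
    (h0 : x e0 = none) : kle x (ksup x (ksingle e0 i0)) := by
  intro e i h
  by_cases he : e = e0
  · rw [he, h0] at h; exact absurd h (by simp)
  · rw [ksup_single_ne x i0 he]; exact h

omit [DecidableEq E] in
lemma kle_of_compat (x y : E → Option (Fin k))
    (hc : ∀ e a b, x e = some a → y e = some b → a = b) :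
    kle x (ksup (ksup x y) y) := by
  intro e i h
  cases hy : y e with
  | none => rw [ksup_nr hy, ksup_nr hy]; exact h
  | some b =>
    have hb : i = b := hc e i b h hy
    subst hb
    have h1 : ksup x y e = some i := by rw [ksup_ss h hy, if_pos rfl]
    rw [ksup_ss h1 hy, if_pos rfl]

omit [DecidableEq E] in
lemma kle_sup_sup (x y : E → Option (Fin k)) : kle y (ksup (ksup x y) y) := by
  intro e i h
  cases hx : x e with
  | none =>
    have h1 : ksup x y e = some i := by rw [ksup_nl hx]; exact h
    rw [ksup_ss h1 h, if_pos rfl]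
  | some a =>
    by_cases hai : a = i
    · subst hai
      have h1 : ksup x y e = some a := by rw [ksup_ss hx h, if_pos rfl]
      rw [ksup_ss h1 h, if_pos rfl]
    · have h1 : ksup x y e = none := by rw [ksup_ss hx h, if_neg hai]
      rw [ksup_nl h1]; exact h

/-- Orthant submodularity derived from k-submodularity. -/
lemma orth (f : (E → Option (Fin k)) → ℝ) (hf : KSubmodular f)
    (x y : E → Option (Fin k)) (hxy : kle x y) (e0 : E) (h0 : y e0 = none)
    (i : Fin k) :
    f (ksup y (ksingle e0 i)) - f y ≤ f (ksup x (ksingle e0 i)) - f x := by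
  have hx0 : x e0 = none := by
    cases hx : x e0 with
    | none => rfl
    | some a => rw [hxy e0 a hx] at h0; exact absurd h0 (by simp)
  have hsup : ksup y (ksup x (ksingle e0 i)) = ksup y (ksingle e0 i) := by
    funext e
    by_cases he : e = e0
    · subst he
      rw [ksup_nl h0, ksup_nl h0, ksup_nl hx0]
    · have hbe : ksup x (ksingle e0 i) e = x e := ksup_single_ne x i he
      cases hx : x e with
      | none =>
        rw [ksup_nr (hbe.trans hx), ksup_nr (ksingle_ne he i)]
      | some a =>
        have hy := hxy e a hx
        rw [ksup_ss hy (hbe.trans hx), if_pos rfl, ksup_nr (ksingle_ne he i), hy]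
  have hinf : kinf y (ksup x (ksingle e0 i)) = x := by
    funext e
    by_cases he : e = e0
    · subst he; rw [kinf_nl h0, hx0]
    · have hbe : ksup x (ksingle e0 i) e = x e := ksup_single_ne x i he
      cases hx : x e with
      | none => rw [kinf_nr (hbe.trans hx)]
      | some a =>
        have hy := hxy e a hx
        rw [kinf_ss hy (hbe.trans hx), if_pos rfl]
  have := hf y (ksup x (ksingle e0 i))
  rw [hsup, hinf] at this
  linarith

end Aux

theorem stmt_15 {E : Type*} [Fintype E] [DecidableEq E] {k w : ℕ} (hk : 0 < k)
    (f : (E → Option (Fin k)) → ℝ) (hf : KSubmodular f) (hmono : KMonotone f)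
    (hnn : ∀ x, 0 ≤ f x)
    (o : E → Option (Fin k)) (r : ℕ) (hr : (suppK o).card = r) (hwr : w ≤ r)
    (q ob : ℕ → (E → Option (Fin k)))
    (hq0 : q 0 = fun _ => none)
    (hstep : ∀ j, 1 ≤ j → j ≤ w → ∃ e ∈ suppK o \ suppK (q (j - 1)), ∃ i : Fin k,
      q j = ksup (q (j - 1)) (ksingle e i))
    (hgreedy : ∀ j, 1 ≤ j → j ≤ w →
      ∀ e ∈ suppK o \ suppK (q (j - 1)), ∀ i : Fin k,
        f (ksup (q (j - 1)) (ksingle e i)) ≤ f (q j))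
    (hob0 : ob 0 = o)
    (hob : ∀ j, 1 ≤ j → j ≤ w → ob j = ksup (ksup (ob (j - 1)) (q j)) (q j)) :
    f o - f (q w) ≤ f (ob w) := by
  have key : ∀ j, j ≤ w → kle (q j) (ob j) ∧ f o - f (ob j) ≤ f (q j) - f (q 0) := by
    intro j
    induction j with
    | zero =>
      intro _
      refine ⟨?_, by rw [hob0]; linarith⟩
      intro e i h
      rw [hq0] at h; exact absurd h (by simp)
    | succ m ih =>
      intro hjw
      obtain ⟨hmle, hmineq⟩ := ih (by omega)
      obtain ⟨e0, he0, i0, hqeq⟩ := hstep (m + 1) (by omega) hjw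
      have hobj := hob (m + 1) (by omega) hjw
      simp only [Nat.add_sub_cancel] at hqeq hobj he0
      have he0n : q m e0 = none := by
        simp [suppK] at he0
        exact he0.2
      have hq_le : kle (q m) (q (m + 1)) := by
        rw [hqeq]; exact kle_sup_single _ _ _ he0n
      have hle1 : kle (q (m + 1)) (ob (m + 1)) := by
        rw [hobj]; exact kle_sup_sup _ _
      have hqe0 : q (m + 1) e0 = some i0 := by
        rw [hqeq]; exact ksup_single_self i0 he0n
      have hqne : ∀ e, e ≠ e0 → q (m + 1) e = q m e := by
        intro e he; rw [hqeq]; exact ksup_single_ne _ i0 he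
      refine ⟨hle1, ?_⟩
      have hstepineq : f (ob m) - f (ob (m + 1)) ≤ f (q (m + 1)) - f (q m) := by
        by_cases hconf : ∃ i', ob m e0 = some i' ∧ i' ≠ i0
        · -- conflict case
          obtain ⟨i', hob_e0, hne⟩ := hconf
          set s : E → Option (Fin k) := fun e => if e = e0 then none else ob m e with hs
          have hs0 : s e0 = none := by simp [hs]
          have hsne : ∀ e, e ≠ e0 → s e = ob m e := fun e he => by simp [hs, he]
          have hA : ksup (ob m) (q (m + 1)) = s := by
            funext e
            by_cases he : e = e0
            · subst he
              rw [ksup_ss hob_e0 hqe0, if_neg hne, hs0]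
            · rw [hsne e he]
              have hq1 := hqne e he
              cases hq : q m e with
              | none => rw [ksup_nr (hq1.trans hq)]
              | some a =>
                have hoa := hmle e a hq
                rw [ksup_ss hoa (hq1.trans hq), if_pos rfl, hoa]
          have hB : ob (m + 1) = ksup s (ksingle e0 i0) := by
            rw [hobj, hA]
            funext e
            by_cases he : e = e0
            · subst he
              rw [ksup_nl hs0, hqe0, ksup_single_self i0 hs0]
            · rw [ksup_single_ne s i0 he]
              have hq1 := hqne e he
              cases hq : q m e with
              | none => rw [ksup_nr (hq1.trans hq)]
              | some a =>
                have hsa : s e = some a := by rw [hsne e he]; exact hmle e a hq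
                rw [ksup_ss hsa (hq1.trans hq), if_pos rfl, hsa]
          have hC : ob m = ksup s (ksingle e0 i') := by
            funext e
            by_cases he : e = e0
            · subst he
              rw [ksup_single_self i' hs0, hob_e0]
            · rw [ksup_single_ne s i' he, hsne e he]
          have hqs : kle (q m) s := by
            intro e i h
            have he : e ≠ e0 := fun h' => by rw [h', he0n] at h; exact absurd h (by simp)
            rw [hsne e he]; exact hmle e i h
          have h1 : f s ≤ f (ob (m + 1)) := by
            rw [hB]; exact hmono _ _ (kle_sup_single _ _ _ hs0)
          have h2 : f (ksup s (ksingle e0 i')) - f s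
              ≤ f (ksup (q m) (ksingle e0 i')) - f (q m) :=
            orth f hf (q m) s hqs e0 hs0 i'
          have h3 : f (ksup (q m) (ksingle e0 i')) ≤ f (q (m + 1)) :=
            hgreedy (m + 1) (by omega) hjw e0 he0 i'
          rw [hC]
          linarith
        · -- no conflict: ob m ⪯ ob (m + 1)
          push_neg at hconf
          have hcompat : ∀ e a b, ob m e = some a → q (m + 1) e = some b → a = b := by
            intro e a b ha hb
            by_cases he : e = e0
            · subst he
              rw [hqe0] at hb
              have hbi0 : b = i0 := Option.some_inj.mp hb.symm
              subst hbi0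
              exact hconf a ha
            · rw [hqne e he] at hb
              have := hmle e b hb
              rw [ha] at this
              exact Option.some_inj.mp this
          have hle2 : kle (ob m) (ob (m + 1)) := by
            rw [hobj]; exact kle_of_compat _ _ hcompat
          have h1 := hmono _ _ hle2
          have h2 := hmono _ _ hq_le
          linarith
      linarith
  have h := (key w le_rfl).2
  have h0 := hnn (q 0)
  linarith
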